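/- Let W1 and W2 be B-DMCs with finite output alphabets Y1 and Y2, and let (W⁻, W⁺) be their irregular kernel transform. Then Z(W⁺) = Z(W1)·Z(W2). -/
import Mathlib


open Finset Real

/-- A binary-input discrete memoryless channel (B-DMC): nonnegative entries
and each row (fixed input) sums to 1. -/
def IsBDMC {Y : Type*} [Fintype Y] (W : Y → ZMod 2 → ℝ) : Prop :=
  (∀ y x, 0 ≤ W y x) ∧ (∀ x, ∑ y, W y x = 1)

/-- Bhattacharyya parameter Z(W). -/
noncomputable def bhatt {Y : Type*} [Fintype Y] (W : Y → ZMod 2 → ℝ) : ℝ :=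
  ∑ y, Real.sqrt (W y 0 * W y 1)

/-- The plus-channel W⁺ of the irregular kernel transform. -/
noncomputable def Wplus {Y1 Y2 : Type*} (W1 : Y1 → ZMod 2 → ℝ)
    (W2 : Y2 → ZMod 2 → ℝ) : Y1 × Y2 × ZMod 2 → ZMod 2 → ℝ :=
  fun y u2 => (1 / 2) * W1 y.1 (y.2.2 + u2) * W2 y.2.1 u2

lemma key (a b c d : ℝ) (ha : 0 ≤ a) (hb : 0 ≤ b) (hc : 0 ≤ c) :
    Real.sqrt ((1/2 * a * c) * (1/2 * b * d)) =
    1/2 * (Real.sqrt (a * b) * Real.sqrt (c * d)) := by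
  have : (1/2 * a * c) * (1/2 * b * d) = (1/2)^2 * ((a*b) * (c*d)) := by ring
  rw [this, Real.sqrt_mul (by positivity), Real.sqrt_sq (by norm_num),
    Real.sqrt_mul (by positivity)]

/-- Z(W⁺) = Z(W1)·Z(W2). -/
theorem bhatt_Wplus {Y1 Y2 : Type*} [Fintype Y1] [Fintype Y2]
    (W1 : Y1 → ZMod 2 → ℝ) (W2 : Y2 → ZMod 2 → ℝ)
    (h1 : IsBDMC W1) (h2 : IsBDMC W2) :
    bhatt (Wplus W1 W2) = bhatt W1 * bhatt W2 := by
  simp only [bhatt, Wplus]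
  rw [Fintype.sum_prod_type, Finset.sum_mul_sum]
  refine Finset.sum_congr rfl fun y1 _ => ?_
  rw [Fintype.sum_prod_type]
  refine Finset.sum_congr rfl fun y2 _ => ?_
  have e : ∀ u1 : ZMod 2,
      Real.sqrt ((1/2 * W1 y1 (u1 + 0) * W2 y2 0) * (1/2 * W1 y1 (u1 + 1) * W2 y2 1)) =
      1/2 * (Real.sqrt (W1 y1 (u1+0) * W1 y1 (u1+1)) * Real.sqrt (W2 y2 0 * W2 y2 1)) :=
    fun u1 => key _ _ _ _ (h1.1 _ _) (h1.1 _ _) (h2.1 _ _)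
  show ∑ u1 : ZMod 2, Real.sqrt ((1/2 * W1 y1 (u1 + 0) * W2 y2 0) * (1/2 * W1 y1 (u1 + 1) * W2 y2 1)) = _
  simp only [e]
  rw [show (Finset.univ : Finset (ZMod 2)) = {0, 1} by decide]
  rw [Finset.sum_insert (by decide), Finset.sum_singleton]
  norm_num
  rw [show (2 : ZMod 2) = 0 from rfl, mul_comm (W1 y1 1)]
  ring
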